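/- The series Σ_{n=0}^{∞} (1/c_n)·K_n converges to the zero function in L²([−1,1]; ℝ); that is, the partial sums S_N(s) := Σ_{n=0}^{N−1} K_n(s)/c_n satisfy ∫_{−1}^{1} S_N(s)² ds → 0 as N → ∞. -/

import Mathlib

open Polynomial

/-- The `n`-th Legendre polynomial (over `ℝ`), normalized so that `legendre n` evaluates
to `1` at `1`, defined via Rodrigues' formula. -/
noncomputable def legendre (n : ℕ) : Polynomial ℝ :=
  ((1 : ℝ) / (2 ^ n * n.factorial)) • derivative^[n] ((X ^ 2 - 1) ^ n)

/-- The `n`-th Koornwinder polynomial `K_n(s) = -(1+s) L_n'(s) + (n² + n + 1) L_n(s)`. -/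
noncomputable def koornwinder (n : ℕ) : Polynomial ℝ :=
  -(1 + X) * derivative (legendre n) + ((n : ℝ) ^ 2 + (n : ℝ) + 1) • legendre n


/-- The squared norm of the `n`-th Koornwinder polynomial:
`c_n = (n²+1)((n+1)²+1)/(2n+1)`. -/
noncomputable def koornNormSq (n : ℕ) : ℝ :=
  (((n : ℝ) ^ 2 + 1) * (((n : ℝ) + 1) ^ 2 + 1)) / (2 * (n : ℝ) + 1)

/-- abbreviation -/
noncomputable def FF (n : ℕ) : Polynomial ℝ := ((X : ℝ[X]) ^ 2 - 1) ^ n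

lemma deriv_FF (n : ℕ) :
    derivative (FF (n + 1)) = C ((2 : ℝ) * (n + 1)) * (X * FF n) := by
  unfold FF
  rw [derivative_pow]
  simp
  rw [show (C (2:ℝ)) = (2 : ℝ[X]) from map_ofNat C 2]
  ring

-- iterated Leibniz with X
lemma iter_deriv_X_mul (p : ℝ[X]) (m : ℕ) :
    derivative^[m + 1] (X * p) =
      X * derivative^[m + 1] p + ((m : ℝ) + 1) • derivative^[m] p := by
  induction m with
  | zero =>
    simp [derivative_mul]
    ring
  | succ m ih =>
    rw [Function.iterate_succ_apply', ih]
    simp only [derivative_add, derivative_mul, derivative_X, derivative_smul, one_mul,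
      ← Function.iterate_succ_apply']
    push_cast
    module

-- iterated Leibniz with X^2 - 1
lemma iter_deriv_quad_mul (p : ℝ[X]) (m : ℕ) :
    derivative^[m + 2] ((X ^ 2 - 1) * p) =
      (X ^ 2 - 1) * derivative^[m + 2] p
        + (2 * ((m : ℝ) + 2)) • (X * derivative^[m + 1] p)
        + (((m : ℝ) + 2) * ((m : ℝ) + 1)) • derivative^[m] p := by
  induction m with
  | zero =>
    simp only [Function.iterate_succ_apply, Function.iterate_zero_apply, Function.iterate_one]
    simp only [derivative_mul, derivative_sub, derivative_one, derivative_pow, derivative_X,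
      derivative_ofNat, derivative_natCast, derivative_C, derivative_zero, smul_eq_C_mul, map_mul, map_add,
      map_one, map_ofNat, map_natCast, Function.iterate_zero_apply]
    push_cast
    ring
  | succ m ih =>
    rw [Function.iterate_succ_apply', ih]
    simp only [derivative_add, derivative_mul, derivative_sub, derivative_one, derivative_pow,
      derivative_X, derivative_smul, one_mul, mul_one, ← Function.iterate_succ_apply']
    simp only [smul_eq_C_mul, map_mul, map_add, map_one, map_ofNat, map_natCast]
    push_cast
    ring

lemma wayA (n k : ℕ) :
    derivative^[k + 2] (FF (n + 1)) =
      (2 * ((n : ℝ) + 1)) •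
        (X * derivative^[k + 1] (FF n) + ((k : ℝ) + 1) • derivative^[k] (FF n)) := by
  have h1 : derivative^[k + 2] (FF (n + 1)) =
      derivative^[k + 1] (derivative (FF (n + 1))) := by
    rw [← Function.iterate_succ_apply]
  rw [h1, deriv_FF, ← smul_eq_C_mul, iterate_derivative_smul, iter_deriv_X_mul]

lemma odeFF (n : ℕ) :
    (X ^ 2 - 1) * derivative^[n + 2] (FF n) + (2 : ℝ) • (X * derivative^[n + 1] (FF n))
      = ((n : ℝ) * ((n : ℝ) + 1)) • derivative^[n] (FF n) := by
  have hA := wayA n n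
  have hB : derivative^[n + 2] (FF (n + 1)) =
      (X ^ 2 - 1) * derivative^[n + 2] (FF n)
        + (2 * ((n : ℝ) + 2)) • (X * derivative^[n + 1] (FF n))
        + (((n : ℝ) + 2) * ((n : ℝ) + 1)) • derivative^[n] (FF n) := by
    have : FF (n + 1) = (X ^ 2 - 1) * FF n := by rw [FF, FF, pow_succ, mul_comm]
    rw [this, iter_deriv_quad_mul]
  have h := hA.symm.trans hB
  simp only [smul_add, smul_smul] at h ⊢
  linear_combination (norm := module) -h

lemma FF_dvd (n k : ℕ) (hk : k ≤ n) :
    ∃ q : ℝ[X], derivative^[k] (FF n) = FF (n - k) * q := by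
  induction k with
  | zero => exact ⟨1, by simp⟩
  | succ k ih =>
    obtain ⟨q, hq⟩ := ih (le_of_lt hk)
    have hnk : n - k = (n - (k + 1)) + 1 := by omega
    refine ⟨C ((2 : ℝ) * ((n - (k + 1) : ℕ) + 1)) * (X * q) + (X ^ 2 - 1) * derivative q, ?_⟩
    rw [Function.iterate_succ_apply', hq, derivative_mul, hnk, deriv_FF]
    have : FF (n - (k + 1) + 1) = (X ^ 2 - 1) * FF (n - (k + 1)) := by
      rw [FF, FF, pow_succ, mul_comm]
    rw [this]
    ring

lemma eval_iterate_FF_zero {x : ℝ} (hx : x ^ 2 = 1) {n k : ℕ} (hk : k < n) :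
    ((derivative^[k] (FF n)).eval x) = 0 := by
  obtain ⟨q, hq⟩ := FF_dvd n k (le_of_lt hk)
  rw [hq, eval_mul, FF, eval_pow, eval_sub, eval_pow, eval_one, eval_X, hx]
  have : n - k ≠ 0 := by omega
  simp [zero_pow this]

lemma claimC (n : ℕ) :
    (X ^ 2 - 1) * derivative^[n + 2] (FF (n + 1)) =
      (((n : ℝ) + 1) * ((n : ℝ) + 2)) • derivative^[n] (FF (n + 1)) := by
  set P : ℝ[X] := (X ^ 2 - 1) * derivative^[n + 2] (FF (n + 1))
    - (((n : ℝ) + 1) * ((n : ℝ) + 2)) • derivative^[n] (FF (n + 1)) with hP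
  have hode := odeFF (n + 1)
  simp only [show n + 1 + 2 = n + 3 from rfl, show n + 1 + 1 = n + 2 from rfl] at hode
  have hd : derivative P = 0 := by
    rw [hP]
    simp only [derivative_sub, derivative_mul, derivative_smul, derivative_sub, derivative_pow,
      derivative_X, derivative_one, ← Function.iterate_succ_apply']
    simp only [Nat.succ_eq_add_one, show n + 2 + 1 = n + 3 from rfl, pow_one, mul_one, sub_zero,
      smul_eq_C_mul, map_mul, map_add, map_one, map_ofNat, map_natCast] at hode ⊢
    push_cast at hode ⊢
    linear_combination hode
  have hC : P = C (P.coeff 0) := eq_C_of_derivative_eq_zero hd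
  have h0 : eval 1 (derivative^[n] (FF (n + 1))) = 0 :=
    eval_iterate_FF_zero (by norm_num) (Nat.lt_succ_self n)
  have he : P.eval 1 = 0 := by
    rw [hP]
    simp [h0]
  have hPz : P = 0 := by
    rw [hC] at he ⊢
    simpa using he
  have := sub_eq_zero.mp (hP ▸ hPz)
  exact this

lemma legendre_eq (n : ℕ) :
    legendre n = ((1 : ℝ) / (2 ^ n * n.factorial)) • derivative^[n] (FF n) := rfl

lemma legendre_zero' : legendre 0 = 1 := by
  simp [legendre, FF]

lemma legendre_one' : legendre 1 = X := by
  simp only [legendre, FF]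
  simp
  rw [one_add_one_eq_two, show (2 : ℝ[X]) = C 2 from (map_ofNat C 2).symm, smul_eq_C_mul, ← mul_assoc, ← C_mul]
  norm_num

lemma fact_ne (n : ℕ) : ((2 : ℝ) ^ n * n.factorial) ≠ 0 := by
  positivity

lemma deriv_legendre_eq (n : ℕ) :
    derivative (legendre n)
      = ((1 : ℝ) / (2 ^ n * n.factorial)) • derivative^[n + 1] (FF n) := by
  rw [legendre_eq, derivative_smul, Function.iterate_succ_apply']

-- R1 : L_{n+1}' = X L_n' + (n+1) L_n
lemma legendre_recur1 (n : ℕ) :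
    derivative (legendre (n + 1))
      = X * derivative (legendre n) + ((n : ℝ) + 1) • legendre n := by
  rw [deriv_legendre_eq, deriv_legendre_eq, legendre_eq, wayA n n]
  have h2 : ((2 : ℝ) ^ (n + 1) * (n + 1).factorial)
      = (2 * ((n : ℝ) + 1)) * (2 ^ n * n.factorial) := by
    rw [Nat.factorial_succ]
    push_cast
    ring
  rw [h2]
  simp only [smul_add, smul_sub, smul_smul, mul_smul_comm]
  match_scalars <;> (push_cast; field_simp; try ring)

-- R4 / Bonnet-type : (X²-1) L_n' = (n+1)(L_{n+1} - X L_n)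
lemma legendre_recur4 (n : ℕ) :
    (X ^ 2 - 1) * derivative (legendre n)
      = ((n : ℝ) + 1) • (legendre (n + 1) - X * legendre n) := by
  cases n with
  | zero =>
    rw [legendre_zero', legendre_one']
    simp
  | succ m =>
    rw [deriv_legendre_eq, mul_smul_comm, claimC m, legendre_eq (m + 2), legendre_eq (m + 1),
      show (m + 1) + 1 = m + 2 from rfl, wayA (m + 1) m]
    have h2 : ((2 : ℝ) ^ (m + 2) * (m + 2).factorial)
        = (2 * ((m : ℝ) + 2)) * (2 ^ (m + 1) * (m + 1).factorial) := by
      rw [Nat.factorial_succ]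
      push_cast
      ring
    rw [h2]
    simp only [smul_add, smul_sub, smul_smul, mul_smul_comm]
    match_scalars <;> (push_cast; field_simp; try ring)

noncomputable def Qpoly (N : ℕ) : ℝ[X] :=
  ∑ k ∈ Finset.range N, (2 * (k : ℝ) + 1) • legendre k

-- the key summation identity (★)
lemma legendre_star (N : ℕ) :
    (1 + X) * derivative (legendre N) = (N : ℝ) • legendre N + Qpoly N := by
  induction N with
  | zero => simp [legendre_zero', Qpoly]
  | succ N ih =>
    have h1 := legendre_recur1 N
    have h4 := legendre_recur4 N
    rw [Qpoly, Finset.sum_range_succ, ← Qpoly]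
    simp only [smul_eq_C_mul, map_mul, map_add, map_one, map_ofNat, map_natCast, map_pow]
      at h1 h4 ih ⊢
    push_cast at h1 h4 ih ⊢
    linear_combination (1 + (X : ℝ[X])) * h1 + h4 + ih

lemma koorn_eq (n : ℕ) :
    koornwinder n = ((n : ℝ) ^ 2 + 1) • legendre n - Qpoly n := by
  have hs := legendre_star n
  rw [koornwinder]
  simp only [smul_eq_C_mul, map_mul, map_add, map_one, map_ofNat, map_natCast, map_pow]
    at hs ⊢
  linear_combination -hs

lemma koornNormSq_ne (n : ℕ) : koornNormSq n ≠ 0 := by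
  rw [koornNormSq]
  positivity

lemma Qpoly_succ (N : ℕ) :
    Qpoly (N + 1) = Qpoly N + (2 * (N : ℝ) + 1) • legendre N := by
  rw [Qpoly, Finset.sum_range_succ, ← Qpoly]

lemma partial_sum_eq (N : ℕ) :
    ∑ n ∈ Finset.range N, (koornNormSq n)⁻¹ • koornwinder n
      = (1 / ((N : ℝ) ^ 2 + 1)) • Qpoly N := by
  induction N with
  | zero => simp [Qpoly]
  | succ N ih =>
    rw [Finset.sum_range_succ, ih, koorn_eq, Qpoly_succ, koornNormSq]
    have h1 : ((N : ℝ) ^ 2 + 1) ≠ 0 := by positivity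
    have h2 : (((N : ℝ) + 1) ^ 2 + 1) ≠ 0 := by positivity
    have h3 : (2 * (N : ℝ) + 1) ≠ 0 := by positivity
    simp only [smul_sub, smul_add, smul_smul]
    match_scalars <;> (push_cast; field_simp; try ring) <;> exact Or.inl trivial

open MeasureTheory intervalIntegral in
lemma polyIBP (p q : ℝ[X]) (a b : ℝ) :
    ∫ x in a..b, p.eval x * (derivative q).eval x
      = p.eval b * q.eval b - p.eval a * q.eval a
        - ∫ x in a..b, (derivative p).eval x * q.eval x := by
  apply intervalIntegral.integral_mul_deriv_eq_deriv_mul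
    (u := fun x => p.eval x) (v := fun x => q.eval x)
  · exact fun x _ => p.hasDerivAt x
  · exact fun x _ => q.hasDerivAt x
  · exact ((derivative p).continuous).intervalIntegrable a b
  · exact ((derivative q).continuous).intervalIntegrable a b

open MeasureTheory intervalIntegral in
lemma parts_iter (n : ℕ) (p : ℝ[X]) :
    ∀ k, k ≤ n →
      (∫ x in (-1 : ℝ)..1, p.eval x * (derivative^[n] (FF n)).eval x)
        = (-1 : ℝ) ^ k *
            ∫ x in (-1 : ℝ)..1,
              (derivative^[k] p).eval x * (derivative^[n - k] (FF n)).eval x := by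
  intro k
  induction k with
  | zero => simp
  | succ k ih =>
    intro hk
    rw [ih (by omega)]
    have hnk : n - k = (n - (k + 1)) + 1 := by omega
    have hq : derivative^[n - k] (FF n) = derivative (derivative^[n - (k + 1)] (FF n)) := by
      rw [hnk, Function.iterate_succ_apply']
    rw [hq, polyIBP]
    rw [eval_iterate_FF_zero (x := 1) (by norm_num) (by omega),
      eval_iterate_FF_zero (x := -1) (by norm_num) (by omega)]
    rw [show derivative ((derivative^[k]) p) = derivative^[k+1] p from
      (Function.iterate_succ_apply' derivative k p).symm]
    ring

open MeasureTheory intervalIntegral in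
lemma JFF : ∀ n : ℕ, (∫ x in (-1 : ℝ)..1, (FF n).eval x)
    = (-1 : ℝ) ^ n * 2 ^ (2 * n + 1) * (n.factorial : ℝ) ^ 2 / ((2 * n + 1).factorial : ℝ) := by
  intro n
  induction n with
  | zero => norm_num [FF]
  | succ n ih =>
    have hibp := polyIBP X (FF (n + 1)) (-1) 1
    rw [deriv_FF] at hibp
    have hb : (FF (n + 1)).eval 1 = 0 := by simp [FF]
    have hb' : (FF (n + 1)).eval (-1) = 0 := by simp [FF]
    rw [hb, hb'] at hibp
    simp only [eval_mul, eval_C, eval_X, derivative_X, eval_one, one_mul, mul_zero] at hibp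
    -- hibp : ∫ x * (2(n+1) * (x * FFn x)) = 0 - 0 - ∫ FF(n+1)
    have hsplit : ∀ x : ℝ, x * ((2 : ℝ) * ((n : ℝ) + 1) * (x * (FF n).eval x))
        = 2 * ((n : ℝ) + 1) * ((FF (n + 1)).eval x + (FF n).eval x) := by
      intro x
      have : (FF (n + 1)).eval x = (x ^ 2 - 1) * (FF n).eval x := by
        simp [FF, pow_succ]
        ring
      rw [this]
      ring
    rw [intervalIntegral.integral_congr (g :=
        fun x => 2 * ((n : ℝ) + 1) * ((FF (n + 1)).eval x + (FF n).eval x))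
        (fun x _ => hsplit x)] at hibp
    rw [intervalIntegral.integral_const_mul, intervalIntegral.integral_add
        ((FF (n + 1)).continuous.intervalIntegrable _ _)
        ((FF n).continuous.intervalIntegrable _ _), ih] at hibp
    -- solve for J_{n+1}
    have hfac : (((2 * (n + 1) + 1).factorial : ℝ))
        = (2 * (n : ℝ) + 3) * ((2 * (n : ℝ) + 2) * ((2 * n + 1).factorial : ℝ)) := by
      rw [show 2 * (n + 1) + 1 = (2 * n + 1) + 1 + 1 by omega, Nat.factorial_succ,
        Nat.factorial_succ]
      push_cast
      ring
    have hfac2 : (((n + 1).factorial : ℝ)) = ((n : ℝ) + 1) * (n.factorial : ℝ) := by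
      rw [Nat.factorial_succ]; push_cast; ring
    have h1 : ((2 * n + 1).factorial : ℝ) ≠ 0 := Nat.cast_ne_zero.mpr (Nat.factorial_ne_zero _)
    have h2 : (2 * (n : ℝ) + 3) ≠ 0 := by positivity
    field_simp at hibp
    have hJ : (∫ x in (-1 : ℝ)..1, (FF (n + 1)).eval x)
        = (-(2 * ((n : ℝ) + 1)) * ((-1) ^ n * 2 ^ (2 * n + 1) * (n.factorial : ℝ) ^ 2))
            / ((2 * (n : ℝ) + 3) * ((2 * n + 1).factorial : ℝ)) := by
      rw [eq_div_iff (by positivity)]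
      linear_combination hibp
    rw [hJ, hfac, hfac2, show 2 * (n + 1) + 1 = 2 * n + 1 + 2 from by omega,
      show n + 1 = n + 1 from rfl]
    field_simp
    ring

lemma FF_monic (k : ℕ) : (FF k).Monic := by
  have h : ((X : ℝ[X]) ^ 2 - 1).Monic := by
    have := Polynomial.monic_X_pow_sub_C (1 : ℝ) (two_ne_zero)
    simpa using this
  exact h.pow k

lemma FF_natDegree (k : ℕ) : (FF k).natDegree = 2 * k := by
  have h : ((X : ℝ[X]) ^ 2 - 1).natDegree = 2 := by
    have := Polynomial.natDegree_X_pow_sub_C (n := 2) (r := (1 : ℝ))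
    simpa using this
  rw [FF, natDegree_pow, h, mul_comm]

lemma natDegree_legendre_le (n : ℕ) : (legendre n).natDegree ≤ n := by
  rw [legendre_eq]
  refine le_trans (natDegree_smul_le _ _) ?_
  refine le_trans (natDegree_iterate_derivative _ _) ?_
  rw [FF_natDegree]
  omega

lemma iter_deriv_add (m : ℕ) (p q : ℝ[X]) :
    derivative^[m] (p + q) = derivative^[m] p + derivative^[m] q := by
  induction m with
  | zero => simp
  | succ m ih => rw [Function.iterate_succ_apply', ih, derivative_add,
      Function.iterate_succ_apply', Function.iterate_succ_apply']

lemma iterate_derivative_FF_self (k : ℕ) :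
    derivative^[2 * k] (FF k) = C (((2 * k).factorial : ℝ)) := by
  by_cases hk : k = 0
  · subst hk; simp [FF]
  have hmon := FF_monic k
  have hdeg := FF_natDegree k
  set r : ℝ[X] := FF k - X ^ (2 * k) with hr
  have hFF : FF k = X ^ (2 * k) + r := by rw [hr]; ring
  have hrdeg : derivative^[2 * k] r = 0 := by
    by_cases h0 : r = 0
    · simp [h0]
    apply iterate_derivative_eq_zero
    have h1 : (FF k).degree = ((2 * k : ℕ) : WithBot ℕ) := by
      rw [degree_eq_natDegree hmon.ne_zero, hdeg]
    have h2 : ((X : ℝ[X]) ^ (2 * k)).degree = ((2 * k : ℕ) : WithBot ℕ) := degree_X_pow _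
    have hdlt : r.degree < ((2 * k : ℕ) : WithBot ℕ) := by
      rw [hr]
      have := Polynomial.degree_sub_lt (h1.trans h2.symm) hmon.ne_zero
        (by rw [hmon.leadingCoeff, leadingCoeff_X_pow])
      rwa [h1] at this
    exact (Polynomial.natDegree_lt_iff_degree_lt h0).mpr hdlt
  rw [hFF, iter_deriv_add, hrdeg, add_zero,
    Polynomial.iterate_derivative_X_pow_eq_C_mul]
  simp [Nat.descFactorial_self]

open MeasureTheory intervalIntegral in
lemma legendre_reduce (j k : ℕ) :
    (∫ x in (-1 : ℝ)..1, (legendre j).eval x * (legendre k).eval x)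
      = (1 / (2 ^ k * (k.factorial : ℝ))) * ((-1 : ℝ) ^ k *
          ∫ x in (-1 : ℝ)..1,
            (derivative^[k] (legendre j)).eval x * (FF k).eval x) := by
  rw [intervalIntegral.integral_congr
      (g := fun x => (1 / (2 ^ k * (k.factorial : ℝ))) *
        ((legendre j).eval x * (derivative^[k] (FF k)).eval x))
      (fun x _ => by rw [legendre_eq k]; simp [eval_smul]; ring),
    intervalIntegral.integral_const_mul, parts_iter k (legendre j) k le_rfl]
  simp

open MeasureTheory intervalIntegral in
lemma legendre_ortho {j k : ℕ} (h : j < k) :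
    (∫ x in (-1 : ℝ)..1, (legendre j).eval x * (legendre k).eval x) = 0 := by
  rw [legendre_reduce j k, iterate_derivative_eq_zero (lt_of_le_of_lt (natDegree_legendre_le j) h)]
  simp

open MeasureTheory intervalIntegral in
lemma legendre_normSq (k : ℕ) :
    (∫ x in (-1 : ℝ)..1, (legendre k).eval x * (legendre k).eval x)
      = 2 / (2 * (k : ℝ) + 1) := by
  rw [legendre_reduce k k]
  have hD : derivative^[k] (legendre k)
      = C ((1 / (2 ^ k * (k.factorial : ℝ))) * ((2 * k).factorial : ℝ)) := by
    rw [legendre_eq, iterate_derivative_smul, ← Function.iterate_add_apply,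
      show k + k = 2 * k from by omega, iterate_derivative_FF_self, smul_C]
    simp [smul_eq_mul]
  rw [hD]
  rw [intervalIntegral.integral_congr
      (g := fun x => ((1 / (2 ^ k * (k.factorial : ℝ))) * ((2 * k).factorial : ℝ)) *
        (FF k).eval x) (fun x _ => by simp),
    intervalIntegral.integral_const_mul, JFF]
  have h1 : ((2 * k + 1).factorial : ℝ) = (2 * (k : ℝ) + 1) * ((2 * k).factorial : ℝ) := by
    rw [Nat.factorial_succ]; push_cast; ring
  have h2 : ((2 * k).factorial : ℝ) ≠ 0 := Nat.cast_ne_zero.mpr (Nat.factorial_ne_zero _)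
  have h3 : ((k).factorial : ℝ) ≠ 0 := Nat.cast_ne_zero.mpr (Nat.factorial_ne_zero _)
  have h4 : (2 * (k : ℝ) + 1) ≠ 0 := by positivity
  rw [h1]
  field_simp
  ring_nf
  rw [show ((-1 : ℝ)) ^ (k * 2) = 1 from by rw [mul_comm, pow_mul]; norm_num]
  ring

open MeasureTheory intervalIntegral in
lemma legendre_gram (j k : ℕ) :
    (∫ x in (-1 : ℝ)..1, (legendre j).eval x * (legendre k).eval x)
      = if j = k then 2 / (2 * (j : ℝ) + 1) else 0 := by
  rcases lt_trichotomy j k with h | h | h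
  · rw [if_neg (by omega), legendre_ortho h]
  · subst h
    rw [if_pos rfl]
    exact legendre_normSq j
  · rw [if_neg (by omega)]
    rw [intervalIntegral.integral_congr
        (g := fun x => (legendre k).eval x * (legendre j).eval x)
        (fun x _ => mul_comm _ _)]
    exact legendre_ortho h

lemma sum_odd (N : ℕ) : ∑ j ∈ Finset.range N, (2 * (j : ℝ) + 1) = (N : ℝ) ^ 2 := by
  induction N with
  | zero => simp
  | succ N ih => rw [Finset.sum_range_succ, ih]; push_cast; ring

open MeasureTheory intervalIntegral in
lemma Qpoly_intSq (N : ℕ) :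
    (∫ x in (-1 : ℝ)..1, ((Qpoly N).eval x) ^ 2) = 2 * (N : ℝ) ^ 2 := by
  have hev : ∀ x : ℝ, (Qpoly N).eval x
      = ∑ k ∈ Finset.range N, (2 * (k : ℝ) + 1) * (legendre k).eval x := by
    intro x
    rw [Qpoly, eval_finset_sum]
    exact Finset.sum_congr rfl fun k _ => by simp
  have hexp : ∀ x : ℝ, ((Qpoly N).eval x) ^ 2
      = ∑ j ∈ Finset.range N, ∑ k ∈ Finset.range N,
          ((2 * (j : ℝ) + 1) * (2 * (k : ℝ) + 1)) *
            ((legendre j).eval x * (legendre k).eval x) := by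
    intro x
    rw [sq, hev, Finset.sum_mul_sum]
    exact Finset.sum_congr rfl fun j _ => Finset.sum_congr rfl fun k _ => by ring
  rw [intervalIntegral.integral_congr (fun x _ => hexp x)]
  rw [intervalIntegral.integral_finset_sum (fun (j : ℕ) _ =>
    ((show Continuous (fun x : ℝ => ∑ k ∈ Finset.range N,
      ((2 * (j : ℝ) + 1) * (2 * (k : ℝ) + 1)) * ((legendre j).eval x * (legendre k).eval x)) from
      continuous_finset_sum _ (fun k _ => continuous_const.mul
      ((legendre j).continuous.mul (legendre k).continuous))).intervalIntegrable _ _))]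
  have : ∀ j ∈ Finset.range N,
      (∫ x in (-1 : ℝ)..1, ∑ k ∈ Finset.range N,
        ((2 * (j : ℝ) + 1) * (2 * (k : ℝ) + 1)) *
          ((legendre j).eval x * (legendre k).eval x))
      = 2 * (2 * (j : ℝ) + 1) := by
    intro j hj
    rw [intervalIntegral.integral_finset_sum (fun (k : ℕ) _ =>
      ((show Continuous (fun x : ℝ =>
        ((2 * (j : ℝ) + 1) * (2 * (k : ℝ) + 1)) * ((legendre j).eval x * (legendre k).eval x)) from
        continuous_const.mul ((legendre j).continuous.mul
        (legendre k).continuous)).intervalIntegrable _ _))]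
    have hterm : ∀ k ∈ Finset.range N,
        (∫ x in (-1 : ℝ)..1, ((2 * (j : ℝ) + 1) * (2 * (k : ℝ) + 1)) *
          ((legendre j).eval x * (legendre k).eval x))
        = if j = k then 2 * (2 * (j : ℝ) + 1) else 0 := by
      intro k _
      rw [intervalIntegral.integral_const_mul, legendre_gram]
      by_cases h : j = k
      · subst h
        rw [if_pos rfl, if_pos rfl]
        have : 2 * (j : ℝ) + 1 ≠ 0 := by positivity
        field_simp
      · rw [if_neg h, if_neg h, mul_zero]
    rw [Finset.sum_congr rfl hterm, Finset.sum_ite_eq (Finset.range N) j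
      (fun _ => 2 * (2 * (j : ℝ) + 1)), if_pos hj]
  rw [Finset.sum_congr rfl this, ← Finset.mul_sum, sum_odd]

open MeasureTheory intervalIntegral Filter in
/-- The series `∑ K_n / c_n` converges to the zero function in `L²([-1,1])`: the `L²` norms
(squared) of the partial sums tend to `0`. -/
theorem koornwinder_sum_tendsto_zero :
    Tendsto
      (fun N : ℕ =>
        ∫ s in (-1 : ℝ)..1,
          (∑ n ∈ Finset.range N, (koornwinder n).eval s / koornNormSq n) ^ 2)
      atTop (nhds 0) := by
  have hfun : ∀ (N : ℕ) (s : ℝ),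
      (∑ n ∈ Finset.range N, (koornwinder n).eval s / koornNormSq n)
        = (Qpoly N).eval s / ((N : ℝ) ^ 2 + 1) := by
    intro N s
    have h := congrArg (eval s) (partial_sum_eq N)
    rw [eval_finset_sum] at h
    simp only [eval_smul, smul_eq_mul] at h
    calc (∑ n ∈ Finset.range N, (koornwinder n).eval s / koornNormSq n)
        = ∑ n ∈ Finset.range N, (koornNormSq n)⁻¹ * (koornwinder n).eval s := by
          exact Finset.sum_congr rfl fun n _ => div_eq_inv_mul _ _
      _ = (1 / ((N : ℝ) ^ 2 + 1)) * (Qpoly N).eval s := h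
      _ = (Qpoly N).eval s / ((N : ℝ) ^ 2 + 1) := by ring
  have hint : ∀ N : ℕ,
      (∫ s in (-1 : ℝ)..1,
        (∑ n ∈ Finset.range N, (koornwinder n).eval s / koornNormSq n) ^ 2)
      = 2 * (N : ℝ) ^ 2 / (((N : ℝ) ^ 2 + 1) ^ 2) := by
    intro N
    have h1 : ((N : ℝ) ^ 2 + 1) ≠ 0 := by positivity
    rw [intervalIntegral.integral_congr
      (g := fun s => (1 / (((N : ℝ) ^ 2 + 1) ^ 2)) * ((Qpoly N).eval s) ^ 2)
      (fun s _ => by rw [hfun N s]; field_simp)]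
    rw [intervalIntegral.integral_const_mul, Qpoly_intSq]
    ring
  simp only [hint]
  have hg : Tendsto (fun N : ℕ => 2 / ((N : ℝ) ^ 2 + 1)) atTop (nhds 0) := by
    apply Filter.Tendsto.div_atTop (tendsto_const_nhds)
    apply Filter.tendsto_atTop_mono (fun N : ℕ => ?_)
      (tendsto_natCast_atTop_atTop (R := ℝ))
    nlinarith [sq_nonneg ((N : ℝ) - 1), Nat.cast_nonneg (α := ℝ) N]
  apply squeeze_zero (fun N => by positivity) (fun N => ?_) hg
  rw [div_le_div_iff₀ (by positivity) (by positivity)]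
  nlinarith [sq_nonneg ((N : ℝ) ^ 2 + 1), sq_nonneg (N : ℝ)]
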